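/- arXiv:1909.00801 — 3 statements merged into one kernel-verified Lean document; each statement's English description precedes it below -/
import Mathlib

section
/- For every complex number λ = i s with s real and |s| ≥ (1/√2 + 1)², one has |cosh(λ) + √λ sinh(λ)| ≥ 1/2 and |cosh(λ) − √λ sinh(λ)| ≥ 1/2, where √λ denotes the principal square root (branch cut along the negative real axis). -/
open Complex

private lemma key_ineq (a b t : ℝ) (ht : 2 ≤ t) (h : a^2*t + 2*b^2 = t) :
    1/4 ≤ (a+b)^2 + b^2 := by
  set X := (a+b)^2 + b^2 with hX
  have hXnn : 0 ≤ X := by positivity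
  have h1 : a^2 ≤ 2*X := by nlinarith [sq_nonneg (a+2*b)]
  have h2 : b^2 ≤ X := by nlinarith [sq_nonneg (a+b)]
  have h3 : t ≤ 3*t*X := by nlinarith [mul_le_mul_of_nonneg_right h1 (by linarith : (0:ℝ) ≤ t),
    mul_le_mul_of_nonneg_left ht hXnn]
  nlinarith

private lemma habs_ge (x y : ℝ) (h : 1/4 ≤ x^2 + y^2) :
    1/2 ≤ ‖((x:ℂ) + (y:ℂ) * I)‖ := by
  rw [Complex.norm_def, Complex.normSq_add_mul_I]
  have : (1/2:ℝ) = Real.sqrt (1/4) := by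
    rw [show (1/4:ℝ) = (1/2)^2 by norm_num, Real.sqrt_sq (by norm_num)]
  rw [this]
  exact Real.sqrt_le_sqrt h

private lemma sqrt_Is_pos (s : ℝ) (hs : 0 < s) :
    (I * s) ^ (1/2 : ℂ) = (Real.sqrt (s/2) : ℂ) * (1 + I) := by
  have hne : I * (s:ℂ) ≠ 0 := by simp [Complex.ext_iff, hs.ne']
  have harg : Complex.arg (I * s) = Real.pi / 2 := by
    rw [Complex.arg_eq_pi_div_two_iff]
    constructor <;> simp [hs]
  have hlog : Complex.log (I * s) = (Real.log s : ℂ) + (Real.pi/2 : ℝ) * I := by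
    rw [Complex.log, harg]
    congr 1
    norm_cast
    congr 1
    simp [abs_of_pos hs]
  rw [Complex.cpow_def_of_ne_zero hne, hlog]
  have h2 : ((Real.log s : ℂ) + (Real.pi/2 : ℝ) * I) * (1/2 : ℂ)
      = (↑(Real.log s / 2) : ℂ) + ↑(Real.pi/4 : ℝ) * I := by
    push_cast; ring
  have h4 : Real.sqrt 2 * Real.sqrt 2 = 2 := Real.mul_self_sqrt (by norm_num)
  have h3 : Real.sqrt (s/2) = Real.sqrt s * (Real.sqrt 2 / 2) := by
    rw [Real.sqrt_div hs.le]
    field_simp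
    nlinarith [Real.sqrt_nonneg s]
  rw [h2, Complex.exp_add, Complex.exp_mul_I, ← Complex.ofReal_exp,
    Real.exp_half, Real.exp_log hs, ← Complex.ofReal_cos, ← Complex.ofReal_sin,
    Real.cos_pi_div_four, Real.sin_pi_div_four, h3]
  push_cast
  ring

private lemma sqrt_Is_neg (s : ℝ) (hs : s < 0) :
    (I * s) ^ (1/2 : ℂ) = (Real.sqrt (-s/2) : ℂ) * (1 - I) := by
  have hne : I * (s:ℂ) ≠ 0 := by simp [Complex.ext_iff, hs.ne]
  have harg : Complex.arg (I * s) = -(Real.pi / 2) := by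
    rw [Complex.arg_eq_neg_pi_div_two_iff]
    constructor <;> simp [hs]
  have hlog : Complex.log (I * s) = (Real.log (-s) : ℂ) + (-(Real.pi/2) : ℝ) * I := by
    rw [Complex.log, harg]
    congr 1
    norm_cast
    congr 1
    rw [norm_mul]
    simp [abs_of_neg hs]
  rw [Complex.cpow_def_of_ne_zero hne, hlog]
  have h2 : ((Real.log (-s) : ℂ) + (-(Real.pi/2) : ℝ) * I) * (1/2 : ℂ)
      = (↑(Real.log (-s) / 2) : ℂ) + ↑(-(Real.pi/4) : ℝ) * I := by
    push_cast; ring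
  have h4 : Real.sqrt 2 * Real.sqrt 2 = 2 := Real.mul_self_sqrt (by norm_num)
  have h3 : Real.sqrt (-s/2) = Real.sqrt (-s) * (Real.sqrt 2 / 2) := by
    rw [Real.sqrt_div (by linarith)]
    field_simp
    nlinarith [Real.sqrt_nonneg (-s)]
  rw [h2, Complex.exp_add, Complex.exp_mul_I, ← Complex.ofReal_exp,
    Real.exp_half, Real.exp_log (by linarith), ← Complex.ofReal_cos, ← Complex.ofReal_sin,
    Real.cos_neg, Real.sin_neg, Real.cos_pi_div_four, Real.sin_pi_div_four, h3]
  push_cast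
  ring

theorem stmt0 (s : ℝ) (hs : |s| ≥ (1 / Real.sqrt 2 + 1) ^ 2) :
    ‖Complex.cosh (I * s) + (I * s) ^ (1/2 : ℂ) * Complex.sinh (I * s)‖ ≥ 1/2 ∧
    ‖Complex.cosh (I * s) - (I * s) ^ (1/2 : ℂ) * Complex.sinh (I * s)‖ ≥ 1/2 := by
  have hq2 : (Real.sqrt 2)^2 = 2 := Real.sq_sqrt (by norm_num)
  have hqpos : 0 < Real.sqrt 2 := Real.sqrt_pos.mpr (by norm_num)
  have hbig : (2:ℝ) ≤ (1 / Real.sqrt 2 + 1) ^ 2 := by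
    rw [div_add' _ _ _ hqpos.ne', div_pow, le_div_iff₀ (by positivity)]
    nlinarith [sq_nonneg (Real.sqrt 2 - 1)]
  have hs2 : (2:ℝ) ≤ |s| := le_trans hbig hs
  have hcosh : Complex.cosh (I * s) = (Real.cos s : ℂ) := by
    rw [mul_comm, Complex.cosh_mul_I, Complex.ofReal_cos]
  have hsinh : Complex.sinh (I * s) = (Real.sin s : ℂ) * I := by
    rw [mul_comm, Complex.sinh_mul_I, Complex.ofReal_sin]
  have hpyth := Real.sin_sq_add_cos_sq s
  rcases lt_or_ge 0 s with hpos | hle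
  · set c := Real.sqrt (s/2) with hc
    have hc2 : c^2 = s/2 := Real.sq_sqrt (by linarith)
    set a := Real.cos s
    set b := c * Real.sin s with hb
    have hkey : a^2 * s + 2*b^2 = s := by
      have hbb : b^2 = (s/2) * (Real.sin s)^2 := by rw [hb, mul_pow, hc2]
      nlinarith
    have habs : |s| = s := abs_of_pos hpos
    have h1 : Complex.cosh (I * s) + (I * s) ^ (1/2 : ℂ) * Complex.sinh (I * s)
        = ((a - b : ℝ) : ℂ) + ((b : ℝ) : ℂ) * I := by
      rw [hcosh, hsinh, sqrt_Is_pos s hpos, hb, Complex.ofReal_sub, Complex.ofReal_mul, hc]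
      linear_combination ((c:ℂ) * ((Real.sin s:ℝ):ℂ)) * Complex.I_sq
    have h2 : Complex.cosh (I * s) - (I * s) ^ (1/2 : ℂ) * Complex.sinh (I * s)
        = ((a + b : ℝ) : ℂ) + ((-b : ℝ) : ℂ) * I := by
      rw [hcosh, hsinh, sqrt_Is_pos s hpos, hb, Complex.ofReal_add, Complex.ofReal_neg,
        Complex.ofReal_mul, hc]
      linear_combination (-(c:ℂ) * ((Real.sin s:ℝ):ℂ)) * Complex.I_sq
    constructor
    · rw [h1]
      apply habs_ge
      have hk := key_ineq a (-b) s (by linarith [habs ▸ hs2]) (by linear_combination hkey)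
      have he : (a + -b)^2 + (-b)^2 = (a-b)^2 + b^2 := by ring
      linarith [he ▸ hk]
    · rw [h2]
      apply habs_ge
      have hk := key_ineq a b s (by linarith [habs ▸ hs2]) hkey
      have he : (a + b)^2 + b^2 = (a+b)^2 + (-b)^2 := by ring
      linarith [he ▸ hk]
  · have hneg : s < 0 := by
      rcases lt_or_eq_of_le hle with h | h
      · exact h
      · rw [h] at hs2; norm_num at hs2
    set c := Real.sqrt (-s/2) with hc
    have hc2 : c^2 = -s/2 := Real.sq_sqrt (by linarith)
    set a := Real.cos s
    set b := c * Real.sin s with hb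
    have hkey : a^2 * (-s) + 2*b^2 = -s := by
      have hbb : b^2 = (-s/2) * (Real.sin s)^2 := by rw [hb, mul_pow, hc2]
      nlinarith
    have habs : |s| = -s := abs_of_neg hneg
    have h1 : Complex.cosh (I * s) + (I * s) ^ (1/2 : ℂ) * Complex.sinh (I * s)
        = ((a + b : ℝ) : ℂ) + ((b : ℝ) : ℂ) * I := by
      rw [hcosh, hsinh, sqrt_Is_neg s hneg, hb, Complex.ofReal_add, Complex.ofReal_mul, hc]
      linear_combination (-(c:ℂ) * ((Real.sin s:ℝ):ℂ)) * Complex.I_sq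
    have h2 : Complex.cosh (I * s) - (I * s) ^ (1/2 : ℂ) * Complex.sinh (I * s)
        = ((a - b : ℝ) : ℂ) + ((-b : ℝ) : ℂ) * I := by
      rw [hcosh, hsinh, sqrt_Is_neg s hneg, hb, Complex.ofReal_sub, Complex.ofReal_neg,
        Complex.ofReal_mul, hc]
      linear_combination ((c:ℂ) * ((Real.sin s:ℝ):ℂ)) * Complex.I_sq
    constructor
    · rw [h1]
      apply habs_ge
      have hk := key_ineq a b (-s) (by linarith [habs ▸ hs2]) hkey
      have he : (a + b)^2 + b^2 = (a+b)^2 + (-b)^2 := by ring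
      linarith [he ▸ hk]
    · rw [h2]
      apply habs_ge
      have hk := key_ineq a (-b) (-s) (by linarith [habs ▸ hs2]) (by linear_combination hkey)
      have he : (a + -b)^2 + (-b)^2 = (a-b)^2 + b^2 := by ring
      linarith [he ▸ hk]
end

section
/- There exists a constant C ≥ 0 such that for all f ∈ H¹(0,1), all g ∈ L²(0,1), all purely imaginary λ, and all ξ ∈ [0,1], one has |∫₀^ξ sinh(λ(ξ−r))(λ f(r) + g(r)) dr| ≤ C‖f‖_{H¹} + ‖g‖_{L²} and |∫₀^ξ cosh(λ(ξ−r))(λ f(r) + g(r)) dr| ≤ C‖f‖_{H¹} + ‖g‖_{L²}. -/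
open Complex MeasureTheory intervalIntegral
set_option maxHeartbeats 1000000

private lemma aux_cs (h : ℝ → ℂ) (hh : MemLp h 2 (volume.restrict (Set.Ioo (0:ℝ) 1))) :
    ∫ r in Set.Ioo (0:ℝ) 1, ‖h r‖ ≤
      Real.sqrt (∫ r in Set.Ioo (0:ℝ) 1, ‖h r‖ ^ 2) := by
  set μ := volume.restrict (Set.Ioo (0:ℝ) 1) with hμ
  have hfin : IsFiniteMeasure μ := ⟨by simp [hμ]⟩
  have hpq : Real.HolderConjugate 2 2 := ⟨by norm_num, by norm_num, by norm_num⟩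
  have h1 : MemLp (fun r => ‖h r‖) (ENNReal.ofReal 2) μ := by
    simpa [ENNReal.ofReal_ofNat] using hh.norm
  have h2 : MemLp (fun _ : ℝ => (1:ℝ)) (ENNReal.ofReal 2) μ := memLp_const 1
  have key := integral_mul_le_Lp_mul_Lq_of_nonneg hpq
    (Filter.Eventually.of_forall (fun x => norm_nonneg _))
    (Filter.Eventually.of_forall (fun _ => zero_le_one)) h1 h2
  have hμu : ∫ _a : ℝ, (1:ℝ) ∂μ = 1 := by
    simp [hμ, Real.volume_Ioo]
  simp only [mul_one, Real.rpow_two, one_pow] at key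
  rw [hμu, Real.one_rpow, mul_one] at key
  rw [Real.sqrt_eq_rpow]
  exact key

private lemma aux_ftc (f f' : ℝ → ℂ)
    (hderiv : ∀ x ∈ Set.Ioo (0:ℝ) 1, HasDerivAt f (f' x) x)
    (hcont : ContinuousOn f (Set.Icc (0:ℝ) 1))
    (hint : IntegrableOn f' (Set.Ioo (0:ℝ) 1) volume)
    {x y : ℝ} (hx : x ∈ Set.Icc (0:ℝ) 1) (hy : y ∈ Set.Icc (0:ℝ) 1) (hxy : x ≤ y) :
    ∫ r in x..y, f' r = f y - f x := by
  refine integral_eq_sub_of_hasDerivAt_of_le hxy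
    (hcont.mono (Set.Icc_subset_Icc hx.1 hy.2))
    (fun t ht => hderiv t ⟨lt_of_le_of_lt hx.1 ht.1, lt_of_lt_of_le ht.2 hy.2⟩) ?_
  rw [intervalIntegrable_iff_integrableOn_Ioo_of_le hxy]
  exact hint.mono_set (Set.Ioo_subset_Ioo hx.1 hy.2)

private lemma aux_sup (f f' : ℝ → ℂ)
    (hderiv : ∀ x ∈ Set.Ioo (0:ℝ) 1, HasDerivAt f (f' x) x)
    (hcont : ContinuousOn f (Set.Icc (0:ℝ) 1))
    (hint : IntegrableOn f' (Set.Ioo (0:ℝ) 1) volume)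
    {x : ℝ} (hx : x ∈ Set.Icc (0:ℝ) 1) :
    ‖f x‖ ≤ (∫ r in Set.Ioo (0:ℝ) 1, ‖f r‖) + ∫ r in Set.Ioo (0:ℝ) 1, ‖f' r‖ := by
  set D := ∫ r in Set.Ioo (0:ℝ) 1, ‖f' r‖ with hD
  have hnint : IntegrableOn (fun r => ‖f' r‖) (Set.Ioo (0:ℝ) 1) volume := hint.norm
  have hfint : IntegrableOn (fun r => ‖f r‖) (Set.Ioo (0:ℝ) 1) volume :=
    ((hcont.integrableOn_Icc).mono_set Set.Ioo_subset_Icc_self).norm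
  have key : ∀ r ∈ Set.Ioo (0:ℝ) 1, ‖f x‖ ≤ ‖f r‖ + D := by
    intro r hr
    have hrIcc : r ∈ Set.Icc (0:ℝ) 1 := Set.Ioo_subset_Icc_self hr
    have hseg : ∀ {u v : ℝ}, u ∈ Set.Icc (0:ℝ) 1 → v ∈ Set.Icc (0:ℝ) 1 → u ≤ v →
        (∫ t in u..v, ‖f' t‖) ≤ D := by
      intro u v hu hv huv
      rw [intervalIntegral.integral_of_le huv, MeasureTheory.integral_Ioc_eq_integral_Ioo]
      exact setIntegral_mono_set hnint
        (Filter.Eventually.of_forall fun t => norm_nonneg _)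
        ((Set.Ioo_subset_Ioo hu.1 hv.2).eventuallyLE)
    rcases le_total r x with hrx | hxr
    · have := aux_ftc f f' hderiv hcont hint hrIcc hx hrx
      have h1 : ‖f x‖ ≤ ‖f r‖ + ‖∫ t in r..x, f' t‖ := by
        have : f x = f r + ∫ t in r..x, f' t := by rw [this]; ring
        rw [this]; exact norm_add_le _ _
      refine h1.trans (add_le_add_right ?_ _)
      exact (intervalIntegral.norm_integral_le_integral_norm hrx).trans (hseg hrIcc hx hrx)
    · have := aux_ftc f f' hderiv hcont hint hx hrIcc hxr
      have h1 : ‖f x‖ ≤ ‖f r‖ + ‖∫ t in x..r, f' t‖ := by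
        have : f x = f r - ∫ t in x..r, f' t := by rw [this]; ring
        rw [this]
        exact (norm_sub_le _ _)
      refine h1.trans (add_le_add_right ?_ _)
      exact (intervalIntegral.norm_integral_le_integral_norm hxr).trans (hseg hx hrIcc hxr)
  have hmeas : (volume (Set.Ioo (0:ℝ) 1)).toReal = 1 := by simp [Real.volume_Ioo]
  have h2 : ∫ _r in Set.Ioo (0:ℝ) 1, ‖f x‖ ≤ ∫ r in Set.Ioo (0:ℝ) 1, (‖f r‖ + D) := by
    refine setIntegral_mono_on (integrableOn_const (by simp [Real.volume_Ioo]))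
      (hfint.add (integrableOn_const (by simp [Real.volume_Ioo])))
      measurableSet_Ioo key
  have h3 : ∫ _r in Set.Ioo (0:ℝ) 1, ‖f x‖ = ‖f x‖ := by
    rw [setIntegral_const, measureReal_def, hmeas, one_smul]
  have h4 : ∫ r in Set.Ioo (0:ℝ) 1, (‖f r‖ + D)
      = (∫ r in Set.Ioo (0:ℝ) 1, ‖f r‖) + D := by
    rw [integral_add hfint (integrableOn_const (by simp [Real.volume_Ioo]))]
    rw [setIntegral_const, measureReal_def, hmeas, one_smul]
  rw [h3, h4] at h2
  exact h2

theorem stmt8 :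
    ∃ C : ℝ, 0 ≤ C ∧
      ∀ (f f' g : ℝ → ℂ),
        (∀ x ∈ Set.Ioo (0:ℝ) 1, HasDerivAt f (f' x) x) →
        ContinuousOn f (Set.Icc (0:ℝ) 1) →
        MemLp f' 2 (volume.restrict (Set.Ioo (0:ℝ) 1)) →
        MemLp g 2 (volume.restrict (Set.Ioo (0:ℝ) 1)) →
        ∀ (s : ℝ), ∀ ξ ∈ Set.Icc (0:ℝ) 1,
          ‖∫ r in (0:ℝ)..ξ,
              Complex.sinh ((I * s) * (ξ - r)) * ((I * s) * f r + g r)‖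
            ≤ C * Real.sqrt ((∫ r in (0:ℝ)..1, ‖f r‖ ^ 2)
                + ∫ r in (0:ℝ)..1, ‖f' r‖ ^ 2)
              + Real.sqrt (∫ r in (0:ℝ)..1, ‖g r‖ ^ 2) ∧
          ‖∫ r in (0:ℝ)..ξ,
              Complex.cosh ((I * s) * (ξ - r)) * ((I * s) * f r + g r)‖
            ≤ C * Real.sqrt ((∫ r in (0:ℝ)..1, ‖f r‖ ^ 2)
                + ∫ r in (0:ℝ)..1, ‖f' r‖ ^ 2)
              + Real.sqrt (∫ r in (0:ℝ)..1, ‖g r‖ ^ 2) := by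
  refine ⟨10, by norm_num, ?_⟩
  intro f f' g hderiv hcont hf' hg s ξ hξ
  have hfin : IsFiniteMeasure (volume.restrict (Set.Ioo (0:ℝ) 1)) := ⟨by simp⟩
  -- basic integrabilities
  have hf'Ioo : IntegrableOn f' (Set.Ioo (0:ℝ) 1) volume := hf'.integrable one_le_two
  have hgIoo : IntegrableOn g (Set.Ioo (0:ℝ) 1) volume := hg.integrable one_le_two
  -- f is MemLp 2 on Ioo
  have hfmem : MemLp f 2 (volume.restrict (Set.Ioo (0:ℝ) 1)) := by
    obtain ⟨Cb, hCb⟩ := isCompact_Icc.exists_bound_of_continuousOn hcont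
    refine MemLp.of_bound ((hcont.mono Set.Ioo_subset_Icc_self).aestronglyMeasurable
      measurableSet_Ioo) Cb ?_
    exact (ae_restrict_iff' measurableSet_Ioo).2
      (Filter.Eventually.of_forall fun x hx => hCb x (Set.Ioo_subset_Icc_self hx))
  -- convert interval integrals of squares to Ioo set integrals
  have hconv : ∀ (h : ℝ → ℂ), (∫ r in (0:ℝ)..1, ‖h r‖ ^ 2)
      = ∫ r in Set.Ioo (0:ℝ) 1, ‖h r‖ ^ 2 := by
    intro h
    rw [intervalIntegral.integral_of_le zero_le_one,
      MeasureTheory.integral_Ioc_eq_integral_Ioo]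
  rw [hconv f, hconv f', hconv g]
  set Sf := ∫ r in Set.Ioo (0:ℝ) 1, ‖f r‖ ^ 2 with hSf
  set Sf' := ∫ r in Set.Ioo (0:ℝ) 1, ‖f' r‖ ^ 2 with hSf'
  set Sg := ∫ r in Set.Ioo (0:ℝ) 1, ‖g r‖ ^ 2 with hSg
  set A := Real.sqrt (Sf + Sf') with hA
  set B := Real.sqrt Sg with hB
  have hSfnn : 0 ≤ Sf := setIntegral_nonneg measurableSet_Ioo fun r _ => sq_nonneg _
  have hSf'nn : 0 ≤ Sf' := setIntegral_nonneg measurableSet_Ioo fun r _ => sq_nonneg _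
  have hAnn : 0 ≤ A := Real.sqrt_nonneg _
  have hA1 : Real.sqrt Sf ≤ A := Real.sqrt_le_sqrt (le_add_of_nonneg_right hSf'nn)
  have hA2 : Real.sqrt Sf' ≤ A := Real.sqrt_le_sqrt (le_add_of_nonneg_left hSfnn)
  have hIf : (∫ r in Set.Ioo (0:ℝ) 1, ‖f r‖) ≤ A := (aux_cs f hfmem).trans hA1
  have hIf' : (∫ r in Set.Ioo (0:ℝ) 1, ‖f' r‖) ≤ A := (aux_cs f' hf').trans hA2
  have hIg : (∫ r in Set.Ioo (0:ℝ) 1, ‖g r‖) ≤ B := aux_cs g hg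
  have hsup : ∀ x ∈ Set.Icc (0:ℝ) 1, ‖f x‖ ≤ 2 * A := by
    intro x hx
    have := aux_sup f f' hderiv hcont hf'Ioo hx
    linarith
  -- interval integrals over [0, ξ] bounded by Ioo (0,1) integrals
  have hseg : ∀ (h : ℝ → ℂ), IntegrableOn h (Set.Ioo (0:ℝ) 1) volume →
      (∫ r in (0:ℝ)..ξ, ‖h r‖) ≤ ∫ r in Set.Ioo (0:ℝ) 1, ‖h r‖ := by
    intro h hint
    rw [intervalIntegral.integral_of_le hξ.1, MeasureTheory.integral_Ioc_eq_integral_Ioo]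
    exact setIntegral_mono_set hint.norm
      (Filter.Eventually.of_forall fun t => norm_nonneg _)
      ((Set.Ioo_subset_Ioo le_rfl hξ.2).eventuallyLE)
  -- interval integrability of various functions on [0, ξ]
  have hf'II : IntervalIntegrable f' volume 0 ξ := by
    rw [intervalIntegrable_iff_integrableOn_Ioo_of_le hξ.1]
    exact hf'Ioo.mono_set (Set.Ioo_subset_Ioo le_rfl hξ.2)
  have hgII : IntervalIntegrable g volume 0 ξ := by
    rw [intervalIntegrable_iff_integrableOn_Ioo_of_le hξ.1]
    exact hgIoo.mono_set (Set.Ioo_subset_Ioo le_rfl hξ.2)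
  -- kernels
  set a : ℝ → ℝ := fun r => Real.cos (s * (ξ - r)) with ha
  set b : ℝ → ℝ := fun r => Real.sin (s * (ξ - r)) with hb
  have hacont : Continuous a := by fun_prop
  have hbcont : Continuous b := by fun_prop
  have hab1 : ∀ r, |a r| ≤ 1 := fun r => Real.abs_cos_le_one _
  have hbb1 : ∀ r, |b r| ≤ 1 := fun r => Real.abs_sin_le_one _
  have hda : ∀ r : ℝ, HasDerivAt (fun t => ((a t : ℝ) : ℂ)) ((s * b r : ℝ) : ℂ) r := by
    intro r
    refine HasDerivAt.ofReal_comp ?_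
    have h1 : HasDerivAt (fun t : ℝ => s * (ξ - t)) (-s) r := by
      simpa using ((hasDerivAt_id r).const_sub ξ).const_mul s
    have := (Real.hasDerivAt_cos (s * (ξ - r))).comp r h1
    convert this using 1
    · rfl
    · rfl
    show s * Real.sin (s * (ξ - r)) = _
    ring
    rfl
  have hdb : ∀ r : ℝ, HasDerivAt (fun t => ((b t : ℝ) : ℂ)) (-((s * a r : ℝ) : ℂ)) r := by
    intro r
    have : HasDerivAt (fun t => ((b t : ℝ) : ℂ)) (((-(s * a r) : ℝ) : ℂ)) r := by
      refine HasDerivAt.ofReal_comp ?_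
      have h1 : HasDerivAt (fun t : ℝ => s * (ξ - t)) (-s) r := by
        simpa using ((hasDerivAt_id r).const_sub ξ).const_mul s
      have := (Real.hasDerivAt_sin (s * (ξ - r))).comp r h1
      convert this using 1
      · rfl
      · rfl
      show -(s * Real.cos (s * (ξ - r))) = _
      ring
      rfl
    simpa using this
  -- interval integrability of kernel * fterms
  have hsbfII : IntervalIntegrable (fun r => ((s * b r : ℝ) : ℂ) * f r) volume 0 ξ := by
    apply ContinuousOn.intervalIntegrable
    apply ContinuousOn.mul
    · exact (Complex.continuous_ofReal.comp (continuous_const.mul hbcont)).continuousOn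
    · exact hcont.mono (Set.uIcc_subset_Icc ⟨le_rfl, zero_le_one⟩ hξ)
  have hsafII : IntervalIntegrable (fun r => ((s * a r : ℝ) : ℂ) * f r) volume 0 ξ := by
    apply ContinuousOn.intervalIntegrable
    apply ContinuousOn.mul
    · exact (Complex.continuous_ofReal.comp (continuous_const.mul hacont)).continuousOn
    · exact hcont.mono (Set.uIcc_subset_Icc ⟨le_rfl, zero_le_one⟩ hξ)
  have hbdd : ∀ (k : ℝ → ℂ), Continuous k → (h : ℝ → ℂ) → IntervalIntegrable h volume 0 ξ →
      IntervalIntegrable (fun r => k r * h r) volume 0 ξ := by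
    intro k hk h hh
    exact hh.continuousOn_mul hk.continuousOn
  have haf'II : IntervalIntegrable (fun r => ((a r : ℝ) : ℂ) * f' r) volume 0 ξ :=
    hbdd _ (Complex.continuous_ofReal.comp hacont) _ hf'II
  have hbf'II : IntervalIntegrable (fun r => ((b r : ℝ) : ℂ) * f' r) volume 0 ξ :=
    hbdd _ (Complex.continuous_ofReal.comp hbcont) _ hf'II
  have hbgII : IntervalIntegrable (fun r => (((b r : ℝ) : ℂ) * I) * g r) volume 0 ξ :=
    hbdd _ ((Complex.continuous_ofReal.comp hbcont).mul continuous_const) _ hgII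
  have hagII : IntervalIntegrable (fun r => ((a r : ℝ) : ℂ) * g r) volume 0 ξ :=
    hbdd _ (Complex.continuous_ofReal.comp hacont) _ hgII
  -- bound for kernel-multiplied integrals
  have hker : ∀ (k h : ℝ → ℂ), (∀ r, ‖k r‖ ≤ 1) →
      IntervalIntegrable (fun r => k r * h r) volume 0 ξ →
      IntervalIntegrable h volume 0 ξ →
      ‖∫ r in (0:ℝ)..ξ, k r * h r‖ ≤ ∫ r in (0:ℝ)..ξ, ‖h r‖ := by
    intro k h hk hkh hh
    refine (intervalIntegral.norm_integral_le_integral_norm hξ.1).trans ?_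
    refine intervalIntegral.integral_mono_on hξ.1 hkh.norm hh.norm fun r hr => ?_
    rw [norm_mul]
    calc ‖k r‖ * ‖h r‖ ≤ 1 * ‖h r‖ := mul_le_mul_of_nonneg_right (hk r) (norm_nonneg _)
      _ = ‖h r‖ := one_mul _
  -- FTC for F = a * f
  have hFTC1 : ∫ t in (0:ℝ)..ξ, (((s * b t : ℝ) : ℂ) * f t + ((a t : ℝ) : ℂ) * f' t)
      = f ξ - ((Real.cos (s * ξ) : ℝ) : ℂ) * f 0 := by
    have := integral_eq_sub_of_hasDerivAt_of_le hξ.1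
      (f := fun t => ((a t : ℝ) : ℂ) * f t)
      (f' := fun t => ((s * b t : ℝ) : ℂ) * f t + ((a t : ℝ) : ℂ) * f' t)
      (((Complex.continuous_ofReal.comp hacont).continuousOn).mul
        (hcont.mono (Set.Icc_subset_Icc le_rfl hξ.2)))
      (fun t ht => ((hda t).mul (hderiv t ⟨ht.1, lt_of_lt_of_le ht.2 hξ.2⟩)))
      (hsbfII.add haf'II)
    rw [this]
    simp [ha]
  have hdb' : ∀ r : ℝ, HasDerivAt (fun t => ((b t : ℝ) : ℂ)) (((-(s * a r) : ℝ) : ℂ)) r := by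
    intro r
    refine HasDerivAt.ofReal_comp ?_
    have h1 : HasDerivAt (fun t : ℝ => s * (ξ - t)) (-s) r := by
      simpa using ((hasDerivAt_id r).const_sub ξ).const_mul s
    have := (Real.hasDerivAt_sin (s * (ξ - r))).comp r h1
    convert this using 1
    · rfl
    · rfl
    show -(s * Real.cos (s * (ξ - r))) = _
    ring
    rfl
  have hFTC2 : ∫ t in (0:ℝ)..ξ, (((-(s * a t) : ℝ) : ℂ) * f t + ((b t : ℝ) : ℂ) * f' t)
      = -((Real.sin (s * ξ) : ℝ) : ℂ) * f 0 := by
    have hint2 : IntervalIntegrable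
        (fun t => ((-(s * a t) : ℝ) : ℂ) * f t + ((b t : ℝ) : ℂ) * f' t) volume 0 ξ := by
      refine IntervalIntegrable.add ?_ hbf'II
      apply ContinuousOn.intervalIntegrable
      apply ContinuousOn.mul
      · exact (Complex.continuous_ofReal.comp ((continuous_const.mul hacont).neg)).continuousOn
      · exact hcont.mono (Set.uIcc_subset_Icc ⟨le_rfl, zero_le_one⟩ hξ)
    have := integral_eq_sub_of_hasDerivAt_of_le hξ.1
      (f := fun t => ((b t : ℝ) : ℂ) * f t)
      (f' := fun t => ((-(s * a t) : ℝ) : ℂ) * f t + ((b t : ℝ) : ℂ) * f' t)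
      (((Complex.continuous_ofReal.comp hbcont).continuousOn).mul
        (hcont.mono (Set.Icc_subset_Icc le_rfl hξ.2)))
      (fun t ht => ((hdb' t).mul (hderiv t ⟨ht.1, lt_of_lt_of_le ht.2 hξ.2⟩)))
      hint2
    rw [this]
    simp [hb]
  -- more interval integrabilities
  have hnsbfII : IntervalIntegrable (fun r => ((-(s * b r) : ℝ) : ℂ) * f r) volume 0 ξ := by
    apply ContinuousOn.intervalIntegrable
    apply ContinuousOn.mul
    · exact (Complex.continuous_ofReal.comp ((continuous_const.mul hbcont).neg)).continuousOn
    · exact hcont.mono (Set.uIcc_subset_Icc ⟨le_rfl, zero_le_one⟩ hξ)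
  have hnsafII : IntervalIntegrable (fun r => ((-(s * a r) : ℝ) : ℂ) * f r) volume 0 ξ := by
    apply ContinuousOn.intervalIntegrable
    apply ContinuousOn.mul
    · exact (Complex.continuous_ofReal.comp ((continuous_const.mul hacont).neg)).continuousOn
    · exact hcont.mono (Set.uIcc_subset_Icc ⟨le_rfl, zero_le_one⟩ hξ)
  -- kernel rewrites
  have hker_sinh : ∀ r : ℝ, Complex.sinh ((I * (s:ℂ)) * ((ξ:ℂ) - (r:ℂ)))
      = ((b r : ℝ) : ℂ) * I := by
    intro r
    rw [show (I * (s:ℂ)) * ((ξ:ℂ) - (r:ℂ)) = ((s * (ξ - r) : ℝ) : ℂ) * I by push_cast; ring,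
      Complex.sinh_mul_I, ← Complex.ofReal_sin]
  have hker_cosh : ∀ r : ℝ, Complex.cosh ((I * (s:ℂ)) * ((ξ:ℂ) - (r:ℂ)))
      = ((a r : ℝ) : ℂ) := by
    intro r
    rw [show (I * (s:ℂ)) * ((ξ:ℂ) - (r:ℂ)) = ((s * (ξ - r) : ℝ) : ℂ) * I by push_cast; ring,
      Complex.cosh_mul_I, ← Complex.ofReal_cos]
  -- split the sinh integral
  have eqT1 : (∫ r in (0:ℝ)..ξ, Complex.sinh ((I * (s:ℂ)) * ((ξ:ℂ) - (r:ℂ)))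
        * ((I * (s:ℂ)) * f r + g r))
      = (∫ r in (0:ℝ)..ξ, ((-(s * b r) : ℝ) : ℂ) * f r)
        + ∫ r in (0:ℝ)..ξ, (((b r : ℝ) : ℂ) * I) * g r := by
    rw [← intervalIntegral.integral_add hnsbfII hbgII]
    apply intervalIntegral.integral_congr
    intro r _
    simp only [hker_sinh]
    push_cast
    linear_combination ((b r : ℂ) * (s:ℂ) * f r) * Complex.I_sq
  have eqT2 : (∫ r in (0:ℝ)..ξ, Complex.cosh ((I * (s:ℂ)) * ((ξ:ℂ) - (r:ℂ)))
        * ((I * (s:ℂ)) * f r + g r))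
      = (I * ∫ r in (0:ℝ)..ξ, ((s * a r : ℝ) : ℂ) * f r)
        + ∫ r in (0:ℝ)..ξ, ((a r : ℝ) : ℂ) * g r := by
    rw [← intervalIntegral.integral_const_mul,
      ← intervalIntegral.integral_add (hsafII.const_mul I) hagII]
    apply intervalIntegral.integral_congr
    intro r _
    simp only [hker_cosh]
    push_cast
    ring
  -- use FTC identities
  rw [intervalIntegral.integral_add hsbfII haf'II] at hFTC1
  rw [intervalIntegral.integral_add hnsafII hbf'II] at hFTC2
  have hneg1 : (∫ r in (0:ℝ)..ξ, ((-(s * b r) : ℝ) : ℂ) * f r)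
      = -∫ r in (0:ℝ)..ξ, ((s * b r : ℝ) : ℂ) * f r := by
    rw [← intervalIntegral.integral_neg]
    apply intervalIntegral.integral_congr
    intro r _
    push_cast
    ring
  have hneg2 : (∫ r in (0:ℝ)..ξ, ((-(s * a r) : ℝ) : ℂ) * f r)
      = -∫ r in (0:ℝ)..ξ, ((s * a r : ℝ) : ℂ) * f r := by
    rw [← intervalIntegral.integral_neg]
    apply intervalIntegral.integral_congr
    intro r _
    push_cast
    ring
  rw [hneg2] at hFTC2
  -- final bounds for pieces
  have hbf0 : ‖f 0‖ ≤ 2 * A := hsup 0 ⟨le_rfl, zero_le_one⟩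
  have hbfξ : ‖f ξ‖ ≤ 2 * A := hsup ξ hξ
  have hkaf' : ‖∫ r in (0:ℝ)..ξ, ((a r : ℝ) : ℂ) * f' r‖ ≤ A := by
    refine (hker _ f' (fun r => by simpa using hab1 r) haf'II hf'II).trans ?_
    exact (hseg f' hf'Ioo).trans hIf'
  have hkbf' : ‖∫ r in (0:ℝ)..ξ, ((b r : ℝ) : ℂ) * f' r‖ ≤ A := by
    refine (hker _ f' (fun r => by simpa using hbb1 r) hbf'II hf'II).trans ?_
    exact (hseg f' hf'Ioo).trans hIf'
  have hkbg : ‖∫ r in (0:ℝ)..ξ, (((b r : ℝ) : ℂ) * I) * g r‖ ≤ B := by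
    refine (hker _ g (fun r => by simpa using hbb1 r) hbgII hgII).trans ?_
    exact (hseg g hgIoo).trans hIg
  have hkag : ‖∫ r in (0:ℝ)..ξ, ((a r : ℝ) : ℂ) * g r‖ ≤ B := by
    refine (hker _ g (fun r => by simpa using hab1 r) hagII hgII).trans ?_
    exact (hseg g hgIoo).trans hIg
  constructor
  · -- sinh bound
    have hval : (∫ r in (0:ℝ)..ξ, Complex.sinh ((I * (s:ℂ)) * ((ξ:ℂ) - (r:ℂ)))
          * ((I * (s:ℂ)) * f r + g r))
        = (((Real.cos (s * ξ) : ℝ) : ℂ) * f 0 - f ξ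
            + ∫ r in (0:ℝ)..ξ, ((a r : ℝ) : ℂ) * f' r)
          + ∫ r in (0:ℝ)..ξ, (((b r : ℝ) : ℂ) * I) * g r := by
      rw [eqT1, hneg1]
      linear_combination -hFTC1
    rw [hval]
    have hcosb : ‖((Real.cos (s * ξ) : ℝ) : ℂ) * f 0‖ ≤ 2 * A := by
      rw [norm_mul, Complex.norm_real, Real.norm_eq_abs]
      calc |Real.cos (s * ξ)| * ‖f 0‖ ≤ 1 * ‖f 0‖ :=
            mul_le_mul_of_nonneg_right (Real.abs_cos_le_one _) (norm_nonneg _)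
        _ = ‖f 0‖ := one_mul _
        _ ≤ 2 * A := hbf0
    calc ‖(((Real.cos (s * ξ) : ℝ) : ℂ) * f 0 - f ξ
            + ∫ r in (0:ℝ)..ξ, ((a r : ℝ) : ℂ) * f' r)
          + ∫ r in (0:ℝ)..ξ, (((b r : ℝ) : ℂ) * I) * g r‖
        ≤ ‖((Real.cos (s * ξ) : ℝ) : ℂ) * f 0 - f ξ
            + ∫ r in (0:ℝ)..ξ, ((a r : ℝ) : ℂ) * f' r‖
          + ‖∫ r in (0:ℝ)..ξ, (((b r : ℝ) : ℂ) * I) * g r‖ := norm_add_le _ _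
      _ ≤ (‖((Real.cos (s * ξ) : ℝ) : ℂ) * f 0 - f ξ‖
            + ‖∫ r in (0:ℝ)..ξ, ((a r : ℝ) : ℂ) * f' r‖)
          + ‖∫ r in (0:ℝ)..ξ, (((b r : ℝ) : ℂ) * I) * g r‖ := by
            gcongr
            exact norm_add_le _ _
      _ ≤ ((‖((Real.cos (s * ξ) : ℝ) : ℂ) * f 0‖ + ‖f ξ‖)
            + ‖∫ r in (0:ℝ)..ξ, ((a r : ℝ) : ℂ) * f' r‖)
          + ‖∫ r in (0:ℝ)..ξ, (((b r : ℝ) : ℂ) * I) * g r‖ := by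
            gcongr
            exact norm_sub_le _ _
      _ ≤ ((2 * A + 2 * A) + A) + B := by
            gcongr
      _ ≤ 10 * A + B := by linarith
  · -- cosh bound
    have hval : (∫ r in (0:ℝ)..ξ, Complex.cosh ((I * (s:ℂ)) * ((ξ:ℂ) - (r:ℂ)))
          * ((I * (s:ℂ)) * f r + g r))
        = I * (((Real.sin (s * ξ) : ℝ) : ℂ) * f 0
            + ∫ r in (0:ℝ)..ξ, ((b r : ℝ) : ℂ) * f' r)
          + ∫ r in (0:ℝ)..ξ, ((a r : ℝ) : ℂ) * g r := by
      rw [eqT2]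
      have : (∫ r in (0:ℝ)..ξ, ((s * a r : ℝ) : ℂ) * f r)
          = ((Real.sin (s * ξ) : ℝ) : ℂ) * f 0
            + ∫ r in (0:ℝ)..ξ, ((b r : ℝ) : ℂ) * f' r := by
        linear_combination -hFTC2
      rw [this]
    rw [hval]
    have hsinb : ‖((Real.sin (s * ξ) : ℝ) : ℂ) * f 0‖ ≤ 2 * A := by
      rw [norm_mul, Complex.norm_real, Real.norm_eq_abs]
      calc |Real.sin (s * ξ)| * ‖f 0‖ ≤ 1 * ‖f 0‖ :=
            mul_le_mul_of_nonneg_right (Real.abs_sin_le_one _) (norm_nonneg _)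
        _ = ‖f 0‖ := one_mul _
        _ ≤ 2 * A := hbf0
    calc ‖I * (((Real.sin (s * ξ) : ℝ) : ℂ) * f 0
            + ∫ r in (0:ℝ)..ξ, ((b r : ℝ) : ℂ) * f' r)
          + ∫ r in (0:ℝ)..ξ, ((a r : ℝ) : ℂ) * g r‖
        ≤ ‖I * (((Real.sin (s * ξ) : ℝ) : ℂ) * f 0
            + ∫ r in (0:ℝ)..ξ, ((b r : ℝ) : ℂ) * f' r)‖
          + ‖∫ r in (0:ℝ)..ξ, ((a r : ℝ) : ℂ) * g r‖ := norm_add_le _ _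
      _ ≤ (‖((Real.sin (s * ξ) : ℝ) : ℂ) * f 0‖
            + ‖∫ r in (0:ℝ)..ξ, ((b r : ℝ) : ℂ) * f' r‖)
          + ‖∫ r in (0:ℝ)..ξ, ((a r : ℝ) : ℂ) * g r‖ := by
            rw [norm_mul, Complex.norm_I, one_mul]
            gcongr
            exact norm_add_le _ _
      _ ≤ (2 * A + A) + B := by gcongr
      _ ≤ 10 * A + B := by linarith
end

section
/- Let h ∈ L²(1,2), let λ = i s with s real, |s| ≥ (1/√2+1)², and set D(λ) = −e^{√λ} T₊(λ)² + e^{−√λ} T₋(λ)² where T±(λ) = (1/2)[cosh λ ± √λ sinh λ]. Then there is a constant K independent of λ, h, and ξ such that for all ξ ∈ [1,2], |D(λ)|^{−1} ∫₁² |sinh(√λ(2−r))| |h(r)| dr ≤ K ‖h‖_{L²(1,2)}. -/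
open Complex MeasureTheory

lemma P5_le_exp (t : ℝ) (ht : 0 ≤ t) :
    1 + t + t^2/2 + t^3/6 + t^4/24 + t^5/120 ≤ Real.exp t := by
  have h := Real.sum_le_exp_of_nonneg ht 6
  simp [Finset.sum_range_succ, Nat.factorial] at h
  nlinarith [h]

lemma polykey (t : ℝ) (ht : (2.41:ℝ) ≤ t) :
    10*(t^4+t^2+1) ≤ (9*t^2-10) * (1+t+t^2/2+t^3/6+t^4/24+t^5/120) := by
  nlinarith [sq_nonneg (t-2.41), sq_nonneg t, mul_nonneg (sub_nonneg.2 ht) (sub_nonneg.2 ht), sq_nonneg ((t-2.41)^2), sq_nonneg ((t-2.41)*t), sq_nonneg ((t-2.41)*t^2)]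

lemma Dlow (t u sa : ℝ) (ht : (2.41:ℝ) ≤ t) (hsa : sa = t^2/2)
    (hu0 : 0 ≤ u) (hu2 : u^2 = 1 + sa^2) :
    1/80 ≤ (1+sa-u)/8 - Real.exp (-t) * ((1+sa+u)/8) := by
  have ht0 : (0:ℝ) < t := by linarith
  have hsa0 : (0:ℝ) < sa := by nlinarith
  set P : ℝ := 1 + t + t^2/2 + t^3/6 + t^4/24 + t^5/120 with hP
  have hPpos : 0 < P := by positivity
  have hPle : P ≤ Real.exp t := P5_le_exp t ht0.le
  set E : ℝ := Real.exp (-t) with hE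
  have hE0 : 0 < E := Real.exp_pos _
  have hEP : E * P ≤ 1 := by
    have h1 : E * P ≤ E * Real.exp t := by nlinarith
    rwa [hE, ← Real.exp_add, neg_add_cancel, Real.exp_zero] at h1
  have huub : u * t^2 ≤ sa * t^2 + 1 := by
    have hsq : (sa + 1/(2*sa))^2 = sa^2 + 1 + 1/(4*sa^2) := by field_simp; ring
    have h1 : u ≤ sa + 1/(2*sa) := by
      nlinarith [sq_nonneg (u - (sa + 1/(2*sa))), div_pos one_pos (by positivity : (0:ℝ) < 4*sa^2), div_pos one_pos (by linarith : (0:ℝ) < 2*sa)]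
    have h2 : (1/(2*sa)) * t^2 = 1 := by rw [hsa]; field_simp
    nlinarith [sq_nonneg t]
  have key := polykey t ht
  have hE10 : E * (10*(t^4+t^2+1)) ≤ 9*t^2 - 10 := by
    have h3 : E * (10*(t^4+t^2+1)) * P ≤ (9*t^2-10) * P := by
      calc E * (10*(t^4+t^2+1)) * P = (E*P) * (10*(t^4+t^2+1)) := by ring
        _ ≤ 1 * (10*(t^4+t^2+1)) := mul_le_mul_of_nonneg_right hEP (by positivity)
        _ ≤ (9*t^2-10) * P := by rw [hP]; linarith
    exact le_of_mul_le_mul_right h3 hPpos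
  have hEu : E * (u*t^2) ≤ E * (sa*t^2+1) := mul_le_mul_of_nonneg_left huub hE0.le
  have h10 : t^2 ≤ 10*t^2*((1+sa-u) - E*(1+sa+u)) := by
    have hsub : sa * t^2 = t^4/2 := by rw [hsa]; ring
    nlinarith [hE10, hEu, huub]
  have h11 : (1:ℝ)/10 ≤ (1+sa-u) - E*(1+sa+u) := by
    rw [show (1:ℝ)/10 = t^2/(10*t^2) by field_simp, div_le_iff₀ (by positivity)]
    linarith
  linarith

lemma quad_low (c n v u sa : ℝ) (h1 : c^2+n^2 = 1) (hv : v^2 = 2*sa)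
    (hu2 : u^2 = 1+sa^2) (hu0 : 0 ≤ u) (hsa : 0 < sa) :
    (1+sa-u)/2 ≤ c^2 - v*c*n + sa*n^2 := by
  have hA : 0 < u + 1 - sa := by nlinarith
  nlinarith [sq_nonneg ((u+1-sa)*c - v*n), hA, h1, hu2, hv, mul_pos hA hsa]

lemma quad_up (c n v u sa : ℝ) (h1 : c^2+n^2 = 1) (hv : v^2 = 2*sa)
    (hu2 : u^2 = 1+sa^2) (hu0 : 0 ≤ u) (hsa : 0 < sa) :
    c^2 + v*c*n + sa*n^2 ≤ (1+sa+u)/2 := by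
  have hA : 0 < u + 1 - sa := by nlinarith
  nlinarith [sq_nonneg (v*c - (u+1-sa)*n), hA, h1, hu2, hv, mul_pos hA hsa]

lemma w_sq (s : ℝ) : ((I*(s:ℂ)) ^ (1/2:ℂ))^2 = I*(s:ℂ) := by
  have h := Complex.cpow_nat_inv_pow (I*(s:ℂ)) (n:=2) two_ne_zero
  norm_num at h
  exact h

lemma w_re_nonneg (s : ℝ) (hs : s ≠ 0) : 0 ≤ ((I*(s:ℂ)) ^ (1/2:ℂ)).re := by
  have hz : (I*(s:ℂ)) ≠ 0 := mul_ne_zero I_ne_zero (ofReal_ne_zero.2 hs)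
  rw [Complex.cpow_def_of_ne_zero hz, Complex.exp_re]
  have him : (Complex.log (I*(s:ℂ)) * (1/2:ℂ)).im = (Complex.log (I*(s:ℂ))).im / 2 := by
    simp [Complex.mul_im]; ring
  rw [him, Complex.log_im]
  have h1 := Complex.arg_le_pi (I*(s:ℂ))
  have h2 := Complex.neg_pi_lt_arg (I*(s:ℂ))
  have hpi := Real.pi_pos
  exact mul_nonneg (Real.exp_pos _).le
    (Real.cos_nonneg_of_mem_Icc ⟨by linarith, by linarith⟩)

set_option maxHeartbeats 1000000 in
theorem stmt11 :
    ∃ K : ℝ, 0 < K ∧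
      ∀ (s : ℝ), |s| ≥ (1 / Real.sqrt 2 + 1) ^ 2 →
        ∀ (h : ℝ → ℂ), MemLp h 2 (volume.restrict (Set.Ioo (1:ℝ) 2)) →
          ∀ ξ ∈ Set.Icc (1:ℝ) 2,
            (‖-Complex.exp ((I * s) ^ (1/2 : ℂ))
                  * ((1/2 : ℂ) * (Complex.cosh (I * s)
                      + (I * s) ^ (1/2 : ℂ) * Complex.sinh (I * s))) ^ 2
                + Complex.exp (-((I * s) ^ (1/2 : ℂ)))
                  * ((1/2 : ℂ) * (Complex.cosh (I * s)
                      - (I * s) ^ (1/2 : ℂ) * Complex.sinh (I * s))) ^ 2‖)⁻¹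
              * (∫ r in (1:ℝ)..2,
                  ‖Complex.sinh ((I * s) ^ (1/2 : ℂ) * (2 - r))‖
                    * ‖h r‖)
            ≤ K * Real.sqrt (∫ r in (1:ℝ)..2, ‖h r‖ ^ 2) := by
  refine ⟨80, by norm_num, ?_⟩
  intro s hs h hmem ξ hξ
  have hr2 : (0:ℝ) < Real.sqrt 2 := by positivity
  have hs0 : s ≠ 0 := by
    intro h0
    rw [h0] at hs
    simp only [abs_zero] at hs
    nlinarith [hs, sq_nonneg (1/Real.sqrt 2 + 1), div_pos one_pos hr2]
  set sa := |s| with hsadef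
  have hsa0 : 0 < sa := abs_pos.2 hs0
  set w := (I*(s:ℂ)) ^ (1/2:ℂ) with hw
  obtain ⟨x, hxeq⟩ : ∃ a, w.re = a := ⟨w.re, rfl⟩
  obtain ⟨y, hyeq⟩ : ∃ a, w.im = a := ⟨w.im, rfl⟩
  have hw2 : w^2 = I*(s:ℂ) := w_sq s
  have hx0 : 0 ≤ x := hxeq ▸ w_re_nonneg s hs0
  have hre : x*x - y*y = 0 := by
    have h1 := congrArg Complex.re hw2
    simpa [pow_two, Complex.mul_re, hxeq, hyeq] using h1
  have him : x*y + y*x = s := by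
    have h1 := congrArg Complex.im hw2
    simpa [pow_two, Complex.mul_im, hxeq, hyeq] using h1
  have hy2 : y^2 = x^2 := by nlinarith
  have h2x2 : 2*x^2 = sa := by
    have h4 : (2*x^2)^2 = sa^2 := by
      rw [hsadef, _root_.sq_abs]
      linear_combination (x*y + y*x + s) * him - 4*x^2*hy2
    have h5 := abs_nonneg s
    rw [hsadef] at *
    exact le_antisymm (by nlinarith [sq_nonneg x]) (by nlinarith [sq_nonneg x])
  have hyabs : |y| = x := by
    have h5 : |y|^2 = x^2 := by rw [_root_.sq_abs]; exact hy2
    exact le_antisymm (by nlinarith [abs_nonneg y]) (by nlinarith [abs_nonneg y])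
  have hrsq : Real.sqrt 2 ^ 2 = 2 := Real.sq_sqrt (by norm_num)
  have hr141 : (1.41:ℝ) ≤ Real.sqrt 2 := by nlinarith [Real.sqrt_nonneg 2]
  have hkey2 : 2*(1/Real.sqrt 2 + 1)^2 = (1 + Real.sqrt 2)^2 := by
    field_simp
    linarith [hrsq]
  have ht241 : (2.41:ℝ) ≤ 2*x := by
    have h6 : (1+Real.sqrt 2)^2 ≤ (2*x)^2 := by
      rw [← hkey2]
      nlinarith [hs, h2x2]
    have h7 := Real.sqrt_le_sqrt h6
    rw [Real.sqrt_sq (by positivity), Real.sqrt_sq (by linarith)] at h7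
    linarith [hr141]
  have ht2 : (2*x)^2 = 2*sa := by nlinarith
  set u := Real.sqrt (1 + sa^2) with hudef
  have hu0 : 0 ≤ u := Real.sqrt_nonneg _
  have hu2 : u^2 = 1 + sa^2 := Real.sq_sqrt (by positivity)
  -- trig rewrites
  have hcosh : Complex.cosh (I*(s:ℂ)) = ((Real.cos s : ℝ) : ℂ) := by
    rw [mul_comm, Complex.cosh_mul_I]
    exact (Complex.ofReal_cos s).symm
  have hsinh : Complex.sinh (I*(s:ℂ)) = ((Real.sin s : ℝ) : ℂ) * I := by
    rw [mul_comm, Complex.sinh_mul_I, Complex.ofReal_sin]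
  obtain ⟨c, hceq⟩ : ∃ a, Real.cos s = a := ⟨_, rfl⟩
  obtain ⟨n, hneq⟩ : ∃ a, Real.sin s = a := ⟨_, rfl⟩
  rw [hceq] at hcosh
  rw [hneq] at hsinh
  have hcn : c^2 + n^2 = 1 := by
    rw [← hceq, ← hneq]
    nlinarith [Real.sin_sq_add_cos_sq s]
  have hTpinner : ((c:ℂ) + w * ((n:ℂ) * I)) = ((c - y*n : ℝ) : ℂ) + ((x*n : ℝ):ℂ) * I := by
    apply Complex.ext <;> simp [Complex.mul_re, Complex.mul_im, hxeq, hyeq] <;> ring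
  have hTminner : ((c:ℂ) - w * ((n:ℂ) * I)) = ((c + y*n : ℝ) : ℂ) + ((-(x*n) : ℝ):ℂ) * I := by
    apply Complex.ext <;> simp [Complex.mul_re, Complex.mul_im, hxeq, hyeq] <;> ring
  set Tp := (1/2 : ℂ) * (Complex.cosh (I * s) + w * Complex.sinh (I * s)) with hTp
  set Tm := (1/2 : ℂ) * (Complex.cosh (I * s) - w * Complex.sinh (I * s)) with hTm
  have habs2 : ‖(1/2 : ℂ)‖ = 1/2 := by norm_num
  have habsTp : (‖Tp‖)^2 = ((c - y*n)^2 + (x*n)^2)/4 := by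
    have e1 : Tp = (1/2:ℂ) * (((c - y*n : ℝ):ℂ) + ((x*n:ℝ):ℂ) * I) := by
      rw [hTp, hcosh, hsinh, ← hTpinner]
    rw [e1, norm_mul, habs2, mul_pow, Complex.sq_norm, Complex.normSq_add_mul_I]
    ring
  have habsTm : (‖Tm‖)^2 = ((c + y*n)^2 + (x*n)^2)/4 := by
    have e1 : Tm = (1/2:ℂ) * (((c + y*n : ℝ):ℂ) + ((-(x*n):ℝ):ℂ) * I) := by
      rw [hTm, hcosh, hsinh, ← hTminner]
    rw [e1, norm_mul, habs2, mul_pow, Complex.sq_norm, Complex.normSq_add_mul_I]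
    ring
  -- cross-term bound
  have hcross : |2*y*n*c| = (2*x)*(|c| * |n|) := by
    calc |2*y*n*c| = 2*|y| * (|n| * |c|) := by
          rw [abs_mul, abs_mul, abs_mul, _root_.abs_two]; ring
      _ = 2*x*(|c| * |n|) := by rw [hyabs]; ring
  have hql := quad_low (|c|) (|n|) (2*x) u sa (by rw [_root_.sq_abs, _root_.sq_abs]; exact hcn) ht2 hu2 hu0 hsa0
  have hqu := quad_up (|c|) (|n|) (2*x) u sa (by rw [_root_.sq_abs, _root_.sq_abs]; exact hcn) ht2 hu2 hu0 hsa0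
  have hTplow : (1+sa-u)/8 ≤ (‖Tp‖)^2 := by
    rw [habsTp]
    have expand : (c - y*n)^2 + (x*n)^2 = c^2 - 2*y*n*c + sa*n^2 := by
      linear_combination n^2*hy2 + n^2*h2x2
    rw [expand]
    have h8 : |c|^2 - (2*x)*(|c| * |n|) + sa*|n|^2 ≤ c^2 - 2*y*n*c + sa*n^2 := by
      rw [_root_.sq_abs, _root_.sq_abs]
      linarith [hcross, le_abs_self (2*y*n*c), neg_abs_le (2*y*n*c)]
    linarith [hql]
  have hTmup : (‖Tm‖)^2 ≤ (1+sa+u)/8 := by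
    rw [habsTm]
    have expand : (c + y*n)^2 + (x*n)^2 = c^2 + 2*y*n*c + sa*n^2 := by
      linear_combination n^2*hy2 + n^2*h2x2
    rw [expand]
    have h8 : c^2 + 2*y*n*c + sa*n^2 ≤ |c|^2 + (2*x)*(|c| * |n|) + sa*|n|^2 := by
      rw [_root_.sq_abs, _root_.sq_abs]
      linarith [hcross, le_abs_self (2*y*n*c), neg_abs_le (2*y*n*c)]
    linarith [hqu]
  -- D lower bound
  set D := -Complex.exp w * Tp^2 + Complex.exp (-w) * Tm^2 with hD
  have habsD : Real.exp x * (1/80) ≤ ‖D‖ := by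
    have h1 : ‖Complex.exp w * Tp^2‖ ≤ ‖Complex.exp (-w) * Tm^2‖ + ‖D‖ := by
      have e2 : Complex.exp w * Tp^2 = (Complex.exp (-w) * Tm^2) - D := by rw [hD]; ring
      rw [e2]
      exact norm_sub_le (Complex.exp (-w) * Tm^2) D
    rw [norm_mul, norm_mul, norm_pow, norm_pow, Complex.norm_exp, Complex.norm_exp,
        Complex.neg_re, hxeq] at h1
    have hd := Dlow (2*x) u sa ht241 (by linear_combination -h2x2) hu0 hu2
    have hee : Real.exp (-x) = Real.exp x * Real.exp (-(2*x)) := by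
      rw [← Real.exp_add]; ring_nf
    have hexp0 : (0:ℝ) < Real.exp x := Real.exp_pos _
    have hTp2 : Real.exp x * ((1+sa-u)/8) ≤ Real.exp x * (‖Tp‖)^2 :=
      mul_le_mul_of_nonneg_left hTplow hexp0.le
    have hTm2 : Real.exp (-x) * (‖Tm‖)^2 ≤ Real.exp (-x) * ((1+sa+u)/8) :=
      mul_le_mul_of_nonneg_left hTmup (Real.exp_pos _).le
    calc Real.exp x * (1/80)
        ≤ Real.exp x * ((1+sa-u)/8 - Real.exp (-(2*x)) * ((1+sa+u)/8)) :=
          mul_le_mul_of_nonneg_left hd hexp0.le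
      _ = Real.exp x * ((1+sa-u)/8) - Real.exp (-x) * ((1+sa+u)/8) := by rw [hee]; ring
      _ ≤ ‖D‖ := by linarith [h1]
  -- pass to set integrals over Ioc
  rw [intervalIntegral.integral_of_le (by norm_num : (1:ℝ) ≤ 2),
      intervalIntegral.integral_of_le (by norm_num : (1:ℝ) ≤ 2)]
  have hmuIoo : volume.restrict (Set.Ioo (1:ℝ) 2) = volume.restrict (Set.Ioc (1:ℝ) 2) :=
    Measure.restrict_congr_set Ioo_ae_eq_Ioc
  haveI hprob : IsProbabilityMeasure (volume.restrict (Set.Ioc (1:ℝ) 2)) := by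
    constructor
    rw [Measure.restrict_apply_univ, Real.volume_Ioc]
    norm_num
  have hg2 : MemLp (fun r => ‖h r‖) 2 (volume.restrict (Set.Ioc (1:ℝ) 2)) := by
    rw [← hmuIoo]
    simpa using hmem.norm
  have hg1 : Integrable (fun r => ‖h r‖) (volume.restrict (Set.Ioc (1:ℝ) 2)) :=
    memLp_one_iff_integrable.mp (hg2.mono_exponent (by norm_num))
  have hgsq : Integrable (fun r => ‖h r‖^2) (volume.restrict (Set.Ioc (1:ℝ) 2)) :=
    hg2.integrable_sq
  have hgnn : ∀ r, 0 ≤ ‖h r‖ := fun r => norm_nonneg _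
  set m := ∫ r in Set.Ioc (1:ℝ) 2, ‖h r‖ with hm
  set S := ∫ r in Set.Ioc (1:ℝ) 2, ‖h r‖^2 with hS
  have hm0 : 0 ≤ m := integral_nonneg hgnn
  have hCS : m^2 ≤ S := by
    have he : (0:ℝ) ≤ ∫ r in Set.Ioc (1:ℝ) 2, (‖h r‖ - m)^2 :=
      integral_nonneg (fun r => sq_nonneg _)
    have hexpand : (∫ r in Set.Ioc (1:ℝ) 2, (‖h r‖ - m)^2)
        = S - m^2 := by
      have e3 : (fun r => (‖h r‖ - m)^2)
          = fun r => ‖h r‖^2 - ((2*m)*‖h r‖ - m^2) := by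
        funext r; ring
      have hB : Integrable (fun r => (2*m)*‖h r‖ - m^2)
          (volume.restrict (Set.Ioc (1:ℝ) 2)) := (hg1.const_mul (2*m)).sub (integrable_const _)
      rw [e3, integral_sub hgsq hB]
      have e4 : (∫ r in Set.Ioc (1:ℝ) 2, ((2*m)*‖h r‖ - m^2))
          = (2*m)*m - m^2 := by
        rw [integral_sub (hg1.const_mul (2*m)) (integrable_const _),
            integral_const_mul, integral_const]
        simp [measure_univ, hm]
      rw [e4, hS]
      ring
    linarith [he, hexpand]
  have hS0 : (0:ℝ) ≤ S := le_trans (sq_nonneg m) hCS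
  have hmS : m ≤ Real.sqrt S := (Real.le_sqrt hm0 hS0).2 hCS
  -- pointwise bound on sinh
  have hbound : ∀ r ∈ Set.Ioc (1:ℝ) 2,
      ‖Complex.sinh (w * (2 - (r:ℂ)))‖ ≤ Real.exp x := by
    intro r hr
    have hzre : (w * (2 - (r:ℂ))).re = x * (2 - r) := by
      simp [Complex.mul_re, hxeq, hyeq]
    rw [show Complex.sinh (w * (2 - (r:ℂ))) = (Complex.exp (w * (2 - (r:ℂ))) - Complex.exp (-(w * (2 - (r:ℂ)))))/2 from rfl, norm_div]
    have h9 : ‖Complex.exp (w*(2-(r:ℂ))) - Complex.exp (-(w*(2-(r:ℂ))))‖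
        ≤ Real.exp (x*(2-r)) + Real.exp (-(x*(2-r))) := by
      calc ‖Complex.exp (w*(2-(r:ℂ))) - Complex.exp (-(w*(2-(r:ℂ))))‖
          ≤ ‖Complex.exp (w*(2-(r:ℂ)))‖ + ‖Complex.exp (-(w*(2-(r:ℂ))))‖ := by
            exact norm_sub_le (Complex.exp (w*(2-(r:ℂ)))) (Complex.exp (-(w*(2-(r:ℂ)))))
        _ = Real.exp (x*(2-r)) + Real.exp (-(x*(2-r))) := by
            rw [Complex.norm_exp, Complex.norm_exp, Complex.neg_re, hzre]
    have h10 : (0:ℝ) ≤ x*(2-r) := mul_nonneg hx0 (by linarith [hr.2])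
    have h11 : x*(2-r) ≤ x := mul_le_of_le_one_right hx0 (by linarith [hr.1])
    have h12 : Real.exp (x*(2-r)) ≤ Real.exp x := Real.exp_le_exp.2 h11
    have h13 : Real.exp (-(x*(2-r))) ≤ 1 := by
      rw [Real.exp_le_one_iff]; linarith
    have h14 : (1:ℝ) ≤ Real.exp x := by
      have := Real.add_one_le_exp x; linarith
    have habs2c : ‖(2:ℂ)‖ = 2 := by norm_num
    rw [habs2c]
    linarith
  have hcont : Continuous fun r : ℝ => ‖Complex.sinh (w * (2 - (r:ℂ)))‖ :=
    continuous_norm.comp (Complex.continuous_sinh.comp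
      (continuous_const.mul (continuous_const.sub Complex.continuous_ofReal)))
  have hintRHS : Integrable (fun r => Real.exp x * ‖h r‖)
      (volume.restrict (Set.Ioc (1:ℝ) 2)) := hg1.const_mul _
  have hintLHS : Integrable
      (fun r : ℝ => ‖Complex.sinh (w * (2 - (r:ℂ)))‖ * ‖h r‖)
      (volume.restrict (Set.Ioc (1:ℝ) 2)) := by
    apply hintRHS.mono (hcont.aestronglyMeasurable.mul hg1.1)
    filter_upwards [ae_restrict_mem measurableSet_Ioc] with r hr
    rw [Real.norm_eq_abs, Real.norm_eq_abs, Pi.mul_apply,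
        _root_.abs_of_nonneg (mul_nonneg (norm_nonneg _) (hgnn r)),
        _root_.abs_of_nonneg (mul_nonneg (Real.exp_pos x).le (hgnn r))]
    exact mul_le_mul_of_nonneg_right (hbound r hr) (hgnn r)
  have hJle : (∫ r in Set.Ioc (1:ℝ) 2,
      ‖Complex.sinh (w * (2 - (r:ℂ)))‖ * ‖h r‖) ≤ Real.exp x * m := by
    calc (∫ r in Set.Ioc (1:ℝ) 2,
        ‖Complex.sinh (w * (2 - (r:ℂ)))‖ * ‖h r‖)
        ≤ ∫ r in Set.Ioc (1:ℝ) 2, Real.exp x * ‖h r‖ := by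
          apply integral_mono_ae hintLHS hintRHS
          filter_upwards [ae_restrict_mem measurableSet_Ioc] with r hr
          exact mul_le_mul_of_nonneg_right (hbound r hr) (hgnn r)
      _ = Real.exp x * m := by rw [integral_const_mul]
  have hD0 : (0:ℝ) < ‖D‖ := lt_of_lt_of_le (by positivity) habsD
  have hJnn : (0:ℝ) ≤ ∫ r in Set.Ioc (1:ℝ) 2,
      ‖Complex.sinh (w * (2 - (r:ℂ)))‖ * ‖h r‖ :=
    integral_nonneg fun r => mul_nonneg (norm_nonneg _) (hgnn r)
  have hinv : (‖D‖)⁻¹ ≤ (Real.exp x * (1/80))⁻¹ := by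
    apply inv_anti₀ (by positivity) habsD
  calc (‖D‖)⁻¹ * (∫ r in Set.Ioc (1:ℝ) 2,
        ‖Complex.sinh (w * (2 - (r:ℂ)))‖ * ‖h r‖)
      ≤ (Real.exp x * (1/80))⁻¹ * (Real.exp x * m) :=
        mul_le_mul hinv hJle hJnn (by positivity)
    _ = 80 * m := by
        rw [mul_inv]
        have hxne : Real.exp x ≠ 0 := (Real.exp_pos x).ne'
        field_simp
    _ ≤ 80 * Real.sqrt S := by linarith [hmS]
end
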